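/- Let p be a prime. Then every Schur partition of the cyclic group ℤ/pℤ is automorphic; that is, for every Schur partition S of ℤ/pℤ there exists a subgroup H of the unit group (ℤ/pℤ)ˣ, acting on ℤ/pℤ by multiplication, such that the blocks of S are exactly the H-orbits in ℤ/pℤ. -/

import Mathlib

open scoped Pointwise

noncomputable def classSum {G : Type*} [AddCommGroup G] (C : Set G) :
    AddMonoidAlgebra ℚ G :=
  ∑ᶠ g ∈ C, AddMonoidAlgebra.single g (1 : ℚ)

def IsSchurPartition {G : Type*} [AddCommGroup G] (P : Set (Set G)) : Prop :=
  Setoid.IsPartition P ∧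
  ({0} : Set G) ∈ P ∧
  (∀ C ∈ P, -C ∈ P) ∧
  ∀ C ∈ P, ∀ D ∈ P,
    classSum C * classSum D ∈ AddSubmonoid.closure (classSum '' P)

noncomputable def Omega (n : ℕ) : ℕ :=
  Nat.card {P : Set (Set (ZMod n)) // IsSchurPartition P}

open scoped Classical

/-! ### Auxiliary material -/

noncomputable def zet (p : ℕ) : ℂ := Complex.exp (2 * Real.pi * Complex.I / p)

lemma hzeta {p : ℕ} [NeZero p] : IsPrimitiveRoot (zet p) p :=
  Complex.isPrimitiveRoot_exp p (NeZero.ne p)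

lemma zet_pow_mod {p : ℕ} [NeZero p] (m : ℕ) : zet p ^ m = zet p ^ (m % p) := by
  conv_lhs => rw [← Nat.div_add_mod m p]
  rw [pow_add, pow_mul, hzeta.pow_eq_one, one_pow, one_mul]

noncomputable def chi (p : ℕ) [NeZero p] (t : ZMod p) :
    AddMonoidAlgebra ℚ (ZMod p) →ₐ[ℚ] ℂ :=
  AddMonoidAlgebra.lift ℚ ℂ (ZMod p)
    { toFun := fun g => zet p ^ (t * g.toAdd).val
      map_one' := by simp
      map_mul' := by
        intro a b
        show zet p ^ (t * (a * b).toAdd).val = _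
        rw [← pow_add]
        rw [zet_pow_mod, zet_pow_mod ((t * a.toAdd).val + (t * b.toAdd).val)]
        congr 1
        have h : (a * b).toAdd = a.toAdd + b.toAdd := rfl
        rw [h, mul_add, ZMod.val_add, Nat.mod_mod_of_dvd _ dvd_rfl] }

lemma chi_single {p : ℕ} [NeZero p] (t g : ZMod p) :
    chi p t (AddMonoidAlgebra.single g (1 : ℚ)) = zet p ^ (t * g).val := by
  simp [chi, AddMonoidAlgebra.lift_single]

lemma classSum_eq {p : ℕ} [NeZero p] (C : Set (ZMod p)) :
    classSum C = ∑ g ∈ C.toFinite.toFinset, AddMonoidAlgebra.single g (1 : ℚ) := by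
  conv_lhs => rw [classSum, ← Set.Finite.coe_toFinset C.toFinite]
  exact finsum_mem_coe_finset _ _

lemma chi_classSum {p : ℕ} [NeZero p] (t : ZMod p) (C : Set (ZMod p)) :
    chi p t (classSum C) = ∑ g ∈ C.toFinite.toFinset, zet p ^ (t * g).val := by
  rw [classSum_eq, map_sum]
  simp [chi_single]

lemma pow_indep {p : ℕ} (hp : p.Prime) (q : Fin (p-1) → ℚ)
    (hq : ∑ i, (q i : ℂ) * zet p ^ (i : ℕ) = 0) : ∀ i, q i = 0 := by
  haveI : NeZero p := ⟨hp.pos.ne'⟩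
  have hdeg : (minpoly ℚ (zet p)).natDegree = p - 1 := by
    rw [← Polynomial.cyclotomic_eq_minpoly_rat hzeta hp.pos,
      Polynomial.natDegree_cyclotomic, Nat.totient_prime hp]
  have key : ∀ (n : ℕ), n = (minpoly ℚ (zet p)).natDegree →
      ∀ q : Fin n → ℚ, (∑ i, (q i : ℂ) * zet p ^ (i : ℕ) = 0) → ∀ i, q i = 0 := by
    rintro n rfl q hq
    have li := linearIndependent_pow (K := ℚ) (zet p)
    refine Fintype.linearIndependent_iff.mp li q ?_
    rw [← hq]
    refine Finset.sum_congr rfl fun i _ => ?_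
    rw [Algebra.smul_def]
    norm_num
  exact key (p-1) hdeg.symm q hq

lemma filter_univ_eq {p : ℕ} [NeZero p] (Z : Set (ZMod p)) :
    Z.toFinite.toFinset = Finset.univ.filter (· ∈ Z) := by
  ext x; simp

lemma sum_zet_toFinset {p : ℕ} [NeZero p] (Z : Set (ZMod p)) :
    ∑ g ∈ Z.toFinite.toFinset, zet p ^ g.val
      = ∑ i : ZMod p, (if i ∈ Z then (1:ℂ) else 0) * zet p ^ i.val := by
  rw [filter_univ_eq Z, Finset.sum_filter]
  refine Finset.sum_congr rfl fun i _ => ?_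
  · split <;> simp

lemma indicator_eq {p : ℕ} [NeZero p] (hp : p.Prime) (X Y : Set (ZMod p))
    (hcard : X.toFinite.toFinset.card = Y.toFinite.toFinset.card)
    (hsum : ∑ g ∈ X.toFinite.toFinset, zet p ^ g.val
          = ∑ g ∈ Y.toFinite.toFinset, zet p ^ g.val) : X = Y := by
  classical
  set F : ZMod p → ℚ := fun i => (if i ∈ X then 1 else 0) - (if i ∈ Y then 1 else 0) with hF
  have hFc : ∀ i : ZMod p, ((F i : ℂ)) =
      (if i ∈ X then (1:ℂ) else 0) - (if i ∈ Y then (1:ℂ) else 0) := by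
    intro i; simp [hF]; split <;> split <;> norm_num
  have h0 : ∑ i : ZMod p, (F i : ℂ) * zet p ^ i.val = 0 := by
    simp only [hFc, sub_mul]
    rw [Finset.sum_sub_distrib, ← sum_zet_toFinset X, ← sum_zet_toFinset Y, hsum, sub_self]
  have hre : ∑ i ∈ Finset.range p, (F (i : ZMod p) : ℂ) * zet p ^ i = 0 := by
    rw [← h0]
    refine Finset.sum_nbij' (fun i => ((i : ZMod p))) (fun g => g.val)
      (fun i _ => Finset.mem_univ _)
      (fun g _ => Finset.mem_range.mpr (ZMod.val_lt g))
      (fun i hi => ZMod.val_cast_of_lt (Finset.mem_range.mp hi))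
      (fun g _ => ZMod.natCast_rightInverse g)
      (fun i hi => by rw [ZMod.val_cast_of_lt (Finset.mem_range.mp hi)])
  have h1 : p - 1 + 1 = p := Nat.succ_pred_eq_of_pos hp.pos
  have hA : (∑ i ∈ Finset.range (p-1), (F ((i:ℕ) : ZMod p) : ℂ) * zet p ^ i)
      + (F (((p-1:ℕ)) : ZMod p) : ℂ) * zet p ^ (p-1) = 0 := by
    rw [← Finset.sum_range_succ (fun i => (F ((i:ℕ) : ZMod p) : ℂ) * zet p ^ i) (p-1), h1]
    exact hre
  have hB : (∑ i ∈ Finset.range (p-1), zet p ^ i) + zet p ^ (p-1) = 0 := by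
    rw [← Finset.sum_range_succ (fun i => zet p ^ i) (p-1), h1]
    exact hzeta.geom_sum_eq_zero hp.one_lt
  set q : Fin (p-1) → ℚ := fun i => F ((i:ℕ) : ZMod p) - F (((p-1:ℕ)) : ZMod p) with hqdef
  have hq : ∑ i, (q i : ℂ) * zet p ^ (i : ℕ) = 0 := by
    have e := Fin.sum_univ_eq_sum_range
      (fun i => ((F ((i:ℕ) : ZMod p) : ℂ) - (F (((p-1:ℕ)) : ZMod p) : ℂ)) * zet p ^ i) (p-1)
    rw [show (∑ i, (q i : ℂ) * zet p ^ (i : ℕ))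
        = ∑ i : Fin (p-1), ((F ((i:ℕ):ZMod p):ℂ) - (F (((p-1:ℕ)):ZMod p):ℂ)) * zet p ^ (i:ℕ)
      from Finset.sum_congr rfl fun i _ => by rw [hqdef]; push_cast; ring, e]
    simp only [sub_mul, Finset.sum_sub_distrib, ← Finset.mul_sum]
    linear_combination hA - (F (((p-1:ℕ)) : ZMod p) : ℂ) * hB
  have hq0 := pow_indep hp q hq
  have hconst : ∀ x : ZMod p, F x = F (((p-1:ℕ)) : ZMod p) := by
    intro x
    have hxx : ((x.val : ℕ) : ZMod p) = x := ZMod.natCast_rightInverse x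
    by_cases hx : x.val = p - 1
    · rw [← hxx, hx]
    · have h2 : x.val < p - 1 :=
        lt_of_le_of_ne (Nat.le_pred_of_lt (ZMod.val_lt x)) hx
      have := hq0 ⟨x.val, h2⟩
      rw [hqdef] at this
      simp only [sub_eq_zero] at this
      rw [← hxx]
      exact this
  have hc0 : F (((p-1:ℕ)) : ZMod p) = 0 := by
    have hsum0 : ∑ x : ZMod p, F x = 0 := by
      simp only [hF, Finset.sum_sub_distrib, Finset.sum_boole]
      rw [← filter_univ_eq X, ← filter_univ_eq Y, hcard, sub_self]
    rw [Finset.sum_congr rfl (fun x _ => hconst x), Finset.sum_const, Finset.card_univ,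
      ZMod.card, nsmul_eq_mul, mul_eq_zero] at hsum0
    rcases hsum0 with h | h
    · exact absurd h (by exact_mod_cast hp.pos.ne')
    · exact h
  ext x
  have := (hconst x).trans hc0
  by_cases h1 : x ∈ X <;> by_cases h2 : x ∈ Y <;> simp [hF, h1, h2] at this ⊢

lemma sum_val_eq_range {p : ℕ} [NeZero p] :
    ∑ g : ZMod p, zet p ^ g.val = ∑ i ∈ Finset.range p, zet p ^ i := by
  refine Finset.sum_nbij' (fun g => g.val) (fun i => ((i : ZMod p)))
    (fun g _ => Finset.mem_range.mpr (ZMod.val_lt g))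
    (fun i _ => Finset.mem_univ _)
    (fun g _ => ZMod.natCast_rightInverse g)
    (fun i hi => ZMod.val_cast_of_lt (Finset.mem_range.mp hi))
    (fun g _ => rfl)

lemma sum_val_zero {p : ℕ} (hp : p.Prime) :
    haveI : NeZero p := ⟨hp.pos.ne'⟩
    ∑ g : ZMod p, zet p ^ g.val = 0 := by
  haveI : NeZero p := ⟨hp.pos.ne'⟩
  rw [sum_val_eq_range]
  exact hzeta.geom_sum_eq_zero hp.one_lt

lemma univ_toFinset {p : ℕ} [NeZero p] :
    (Set.univ : Set (ZMod p)).toFinite.toFinset = Finset.univ := by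
  ext x; simp

lemma chi_univ_zero {p : ℕ} [NeZero p] :
    chi p 0 (classSum (Set.univ : Set (ZMod p))) = (p : ℂ) := by
  rw [chi_classSum, univ_toFinset]
  simp [ZMod.val_zero, ZMod.card]

lemma chi_univ_ne {p : ℕ} (hp : p.Prime) {t : ZMod p} (ht : t ≠ 0) :
    haveI : NeZero p := ⟨hp.pos.ne'⟩
    chi p t (classSum (Set.univ : Set (ZMod p))) = 0 := by
  haveI : NeZero p := ⟨hp.pos.ne'⟩
  rw [chi_classSum, univ_toFinset]
  have : ∑ g : ZMod p, zet p ^ (t * g).val = ∑ g : ZMod p, zet p ^ g.val := by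
    haveI : Fact p.Prime := ⟨hp⟩
    exact Fintype.sum_equiv (Equiv.mulLeft₀ t ht) _ _ (fun g => rfl)
  rw [this, sum_val_zero hp]

lemma chi_image {p : ℕ} [NeZero p] (u : (ZMod p)ˣ) (C : Set (ZMod p)) :
    chi p (u : ZMod p) (classSum C)
      = ∑ g ∈ (((u : ZMod p) * ·) '' C).toFinite.toFinset, zet p ^ g.val := by
  rw [chi_classSum]
  refine Finset.sum_nbij' (fun g => (u : ZMod p) * g) (fun h => ((u⁻¹ : (ZMod p)ˣ) : ZMod p) * h)
    ?_ ?_ ?_ ?_ ?_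
  · intro g hg
    simp only [Set.Finite.mem_toFinset] at hg ⊢
    exact ⟨g, hg, rfl⟩
  · intro h hh
    simp only [Set.Finite.mem_toFinset] at hh ⊢
    obtain ⟨g, hg, rfl⟩ := hh
    simpa [← mul_assoc] using hg
  · intro g _; simp [← mul_assoc]
  · intro h _; simp [← mul_assoc]
  · intro g _; rfl

lemma classSum_total {p : ℕ} [NeZero p] {S : Set (Set (ZMod p))}
    (hpart : Setoid.IsPartition S) :
    ∑ C ∈ S.toFinite.toFinset, classSum C = classSum (Set.univ : Set (ZMod p)) := by
  classical
  have hdisj : (↑(S.toFinite.toFinset) : Set (Set (ZMod p))).PairwiseDisjoint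
      (fun C => C.toFinite.toFinset) := by
    intro C hC D hD hne
    have hC' : C ∈ S := by
      have := hC; rw [Finset.mem_coe, Set.Finite.mem_toFinset] at this; exact this
    have hD' : D ∈ S := by
      have := hD; rw [Finset.mem_coe, Set.Finite.mem_toFinset] at this; exact this
    have hCD : Disjoint C D := hpart.pairwiseDisjoint hC' hD' hne
    show Disjoint C.toFinite.toFinset D.toFinite.toFinset
    rw [Finset.disjoint_left]
    intro g hg1 hg2
    exact Set.disjoint_left.mp hCD ((C.toFinite.mem_toFinset).mp hg1)
      ((D.toFinite.mem_toFinset).mp hg2)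
  have hbiun : S.toFinite.toFinset.biUnion (fun C => C.toFinite.toFinset) = Finset.univ := by
    ext g
    simp only [Finset.mem_biUnion, Finset.mem_univ, iff_true]
    obtain ⟨B, ⟨hB, hgB⟩, _⟩ := hpart.2 g
    exact ⟨B, (S.toFinite.mem_toFinset).mpr hB, (B.toFinite.mem_toFinset).mpr hgB⟩
  calc ∑ C ∈ S.toFinite.toFinset, classSum C
      = ∑ C ∈ S.toFinite.toFinset, ∑ g ∈ C.toFinite.toFinset,
          AddMonoidAlgebra.single g (1:ℚ) := Finset.sum_congr rfl fun C _ => classSum_eq C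
    _ = ∑ g ∈ S.toFinite.toFinset.biUnion (fun C => C.toFinite.toFinset),
          AddMonoidAlgebra.single g (1:ℚ) := (Finset.sum_biUnion hdisj).symm
    _ = ∑ g ∈ Finset.univ, AddMonoidAlgebra.single g (1:ℚ) := by rw [hbiun]
    _ = classSum (Set.univ : Set (ZMod p)) := by rw [classSum_eq, univ_toFinset]

lemma card_range_le {p : ℕ} [NeZero p] (S : Set (Set (ZMod p)))
    (h0S : ({0} : Set (ZMod p)) ∈ S)
    (hmulS : ∀ C ∈ S, ∀ D ∈ S,
      classSum C * classSum D ∈ AddSubmonoid.closure (classSum '' S)) :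
    Nat.card ↥(Set.range (fun t : ZMod p =>
        fun C : ↥(S.toFinite.toFinset) => chi p t (classSum C.1)))
      ≤ Nat.card ↥S := by
  classical
  set v : ZMod p → (↥(S.toFinite.toFinset) → ℂ) :=
    fun t C => chi p t (classSum C.1) with hv
  set M : Submodule ℚ (AddMonoidAlgebra ℚ (ZMod p)) :=
    Submodule.span ℚ (classSum '' S) with hM
  have hle : AddSubmonoid.closure (classSum '' S) ≤ M.toAddSubmonoid :=
    AddSubmonoid.closure_le.mpr (fun z hz => Submodule.subset_span hz)
  have hgenmul : ∀ c ∈ classSum '' S, ∀ y ∈ M, c * y ∈ M := by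
    intro c hc y hy
    refine Submodule.span_induction (p := fun y _ => c * y ∈ M) (fun d hd => ?_)
      (by show c * 0 ∈ M; rw [mul_zero]; exact M.zero_mem)
      (fun y1 y2 hy1 hy2 h1 h2 => by show c * (y1 + y2) ∈ M; rw [mul_add]; exact M.add_mem h1 h2)
      (fun q y hy h => by show c * (q • y) ∈ M; rw [mul_smul_comm]; exact M.smul_mem q h) hy
    obtain ⟨C, hC, rfl⟩ := hc
    obtain ⟨D, hD, rfl⟩ := hd
    exact hle (hmulS C hC D hD)
  have hMmul : ∀ x y : AddMonoidAlgebra ℚ (ZMod p), x ∈ M → y ∈ M → x * y ∈ M := by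
    intro x y hx hy
    refine Submodule.span_induction (p := fun x _ => x * y ∈ M) (fun c hc => hgenmul c hc y hy)
      (by show (0:AddMonoidAlgebra ℚ (ZMod p)) * y ∈ M; rw [zero_mul]; exact M.zero_mem)
      (fun x1 x2 hx1 hx2 h1 h2 => by show (x1 + x2) * y ∈ M; rw [add_mul]; exact M.add_mem h1 h2)
      (fun q x hx h => by show (q • x) * y ∈ M; rw [smul_mul_assoc]; exact M.smul_mem q h) hx
  have hone : (1 : AddMonoidAlgebra ℚ (ZMod p)) ∈ M := by
    have h1 : classSum ({0} : Set (ZMod p)) = 1 := by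
      rw [classSum, finsum_mem_singleton]
      exact (AddMonoidAlgebra.one_def).symm
    exact h1 ▸ Submodule.subset_span ⟨{0}, h0S, rfl⟩
  set A : Subalgebra ℚ (AddMonoidAlgebra ℚ (ZMod p)) := M.toSubalgebra hone hMmul with hA
  have hmemA : ∀ C ∈ S, classSum C ∈ A := fun C hC => Submodule.subset_span ⟨C, hC, rfl⟩
  set W : Set (↥(S.toFinite.toFinset) → ℂ) := Set.range v with hW
  haveI : Fintype ↥W := (Set.finite_range v).fintype
  have hrep : ∀ w : ↥W, ∃ t, v t = w.1 := fun w => w.2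
  set rep : ↥W → ZMod p := fun w => (hrep w).choose with hrepdef
  have hrepspec : ∀ w : ↥W, v (rep w) = w.1 := fun w => (hrep w).choose_spec
  set Φ : ↥W → (↥A →* ℂ) :=
    fun w => ((chi p (rep w)).comp A.val).toRingHom.toMonoidHom with hΦ
  have hΦval : ∀ w (a : ↥A), Φ w a = chi p (rep w) a.1 := fun _ _ => rfl
  have hΦinj : Function.Injective Φ := by
    intro w1 w2 h
    apply Subtype.ext
    rw [← hrepspec w1, ← hrepspec w2]
    funext C
    have hCA : classSum C.1 ∈ A := hmemA C.1 ((S.toFinite.mem_toFinset).mp C.2)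
    have := congrArg (fun f : ↥A →* ℂ => f (⟨classSum C.1, hCA⟩ : ↥A)) h
    exact this
  have hli : LinearIndependent ℂ (fun w : ↥W => (w.1 : ↥(S.toFinite.toFinset) → ℂ)) := by
    have hli1 : LinearIndependent ℂ (fun w : ↥W => ((Φ w : ↥A → ℂ))) :=
      (linearIndependent_monoidHom (↥A) ℂ).comp Φ hΦinj
    rw [Fintype.linearIndependent_iff] at hli1 ⊢
    intro c hc
    apply hli1 c
    have hgen : ∀ x ∈ M, ∑ w : ↥W, c w * chi p (rep w) x = 0 := by
      intro x hx
      refine Submodule.span_induction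
        (p := fun x _ => ∑ w : ↥W, c w * chi p (rep w) x = 0) ?_
        (by show ∑ w : ↥W, c w * chi p (rep w) 0 = 0; simp) ?_ ?_ hx
      · rintro z ⟨C, hC, rfl⟩
        show ∑ w : ↥W, c w * chi p (rep w) (classSum C) = 0
        have hCmem : C ∈ S.toFinite.toFinset := (S.toFinite.mem_toFinset).mpr hC
        have heval := congrFun hc (⟨C, hCmem⟩ : ↥(S.toFinite.toFinset))
        simp only [Finset.sum_apply, Pi.smul_apply, smul_eq_mul, Pi.zero_apply] at heval
        calc ∑ w : ↥W, c w * chi p (rep w) (classSum C)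
            = ∑ w : ↥W, c w * (w.1 ⟨C, hCmem⟩) := by
              refine Finset.sum_congr rfl fun w _ => ?_
              rw [← hrepspec w]
          _ = 0 := heval
      · intro x y hx hy ihx ihy
        show ∑ w : ↥W, c w * chi p (rep w) (x + y) = 0
        simp only [map_add, mul_add, Finset.sum_add_distrib]
        change _ at ihx
        change _ at ihy
        rw [ihx, ihy, add_zero]
      · intro q x hx ih
        show ∑ w : ↥W, c w * chi p (rep w) (q • x) = 0
        change _ at ih
        have hw : ∀ w : ↥W, c w * chi p (rep w) (q • x)
            = q • (c w * chi p (rep w) x) := by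
          intro w
          rw [map_smul, Rat.smul_def, Rat.smul_def]
          ring
        rw [Finset.sum_congr rfl fun w _ => hw w, ← Finset.smul_sum, ih, smul_zero]
    funext a
    have := hgen a.1 a.2
    simpa [Finset.sum_apply, hΦval, smul_eq_mul] using this
  have hcard1 : Fintype.card ↥W ≤ Module.finrank ℂ (↥(S.toFinite.toFinset) → ℂ) :=
    hli.fintype_card_le_finrank
  rw [Module.finrank_pi] at hcard1
  calc Nat.card ↥W = Fintype.card ↥W := Nat.card_eq_fintype_card
    _ ≤ Fintype.card ↥(S.toFinite.toFinset) := hcard1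
    _ = (S.toFinite.toFinset).card := Fintype.card_coe _
    _ = S.ncard := (Set.ncard_eq_toFinset_card S S.toFinite).symm
    _ = Nat.card ↥S := (Nat.card_coe_set_eq S).symm

/-- Every Schur partition of `ℤ/pℤ`, `p` prime, is automorphic: its blocks are the orbits
of a subgroup `H` of the unit group `(ℤ/pℤ)ˣ` acting by multiplication. -/
theorem schur_partition_prime_automorphic (p : ℕ) (hp : p.Prime)
    (S : Set (Set (ZMod p))) (hS : IsSchurPartition S) :
    ∃ H : Subgroup (ZMod p)ˣ,
      S = {C : Set (ZMod p) | ∃ a : ZMod p,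
            C = {x : ZMod p | ∃ u ∈ H, (u : ZMod p) * a = x}} := by
  classical
  haveI hFact : Fact p.Prime := ⟨hp⟩
  haveI : NeZero p := ⟨hp.pos.ne'⟩
  obtain ⟨hpart, h0S, hinvS, hmulS⟩ := hS
  have hempty : ∅ ∉ S := hpart.1
  have hex : ∀ x : ZMod p, ∃! B, B ∈ S ∧ x ∈ B := hpart.2
  let block : ZMod p → Set (ZMod p) := fun x => (hex x).choose
  have hblock : ∀ x, block x ∈ S ∧ x ∈ block x := fun x => (hex x).choose_spec.1
  have hbuniq : ∀ x B, B ∈ S ∧ x ∈ B → B = block x := fun x => (hex x).choose_spec.2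
  have hblockeq : ∀ C ∈ S, ∀ x ∈ C, C = block x := fun C hC x hx => hbuniq x C ⟨hC, hx⟩
  have hCne : ∀ C ∈ S, ∃ x, x ∈ C := by
    intro C hC
    rcases Set.eq_empty_or_nonempty C with rfl | h
    · exact absurd hC hempty
    · exact h
  -- the subgroup of units stabilizing every block
  set H : Subgroup (ZMod p)ˣ :=
    { carrier := {u : (ZMod p)ˣ | ∀ C ∈ S, ((u : ZMod p) * ·) '' C = C}
      one_mem' := by intro C hC; ext x; simp
      mul_mem' := by
        intro a b ha hb C hC
        have hcomp : (fun x => ((a * b : (ZMod p)ˣ) : ZMod p) * x)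
            = (fun x => (a : ZMod p) * x) ∘ (fun x => (b : ZMod p) * x) :=
          funext fun x => by simp [mul_assoc]
        rw [hcomp, Set.image_comp, hb C hC, ha C hC]
      inv_mem' := by
        intro u hu C hC
        conv_lhs => rw [← hu C hC]
        rw [← Set.image_comp]
        have hcomp : ((fun x => ((u⁻¹ : (ZMod p)ˣ) : ZMod p) * x)
            ∘ (fun x => (u : ZMod p) * x)) = id := by
          funext x
          show ((u⁻¹ : (ZMod p)ˣ) : ZMod p) * ((u : ZMod p) * x) = x
          rw [← mul_assoc, ← Units.val_mul, inv_mul_cancel, Units.val_one, one_mul]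
        rw [hcomp, Set.image_id] } with hHdef
  refine ⟨H, ?_⟩
  have hHmem : ∀ u : (ZMod p)ˣ, u ∈ H ↔ ∀ C ∈ S, ((u : ZMod p) * ·) '' C = C :=
    fun u => Iff.rfl
  set orb : ZMod p → Set (ZMod p) :=
    fun a => {x : ZMod p | ∃ u ∈ H, (u : ZMod p) * a = x} with horbdef
  -- basic orbit lemmas
  have ho1 : ∀ a, a ∈ orb a := fun a => ⟨1, H.one_mem, by simp⟩
  have ho2 : ∀ u ∈ H, ∀ a, orb ((u : ZMod p) * a) = orb a := by
    intro u hu a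
    ext x
    constructor
    · rintro ⟨w, hw, rfl⟩
      exact ⟨w * u, H.mul_mem hw hu, by simp [Units.val_mul, mul_assoc]⟩
    · rintro ⟨w, hw, rfl⟩
      refine ⟨w * u⁻¹, H.mul_mem hw (H.inv_mem hu), ?_⟩
      show ((w * u⁻¹ : (ZMod p)ˣ) : ZMod p) * ((u : ZMod p) * a) = (w : ZMod p) * a
      rw [Units.val_mul, mul_assoc, ← mul_assoc ((u⁻¹ : (ZMod p)ˣ) : ZMod p),
        ← Units.val_mul, inv_mul_cancel, Units.val_one, one_mul]
  have ho3 : ∀ a b, b ∈ orb a → orb b = orb a := by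
    rintro a b ⟨u, hu, rfl⟩
    exact ho2 u hu a
  have ho4 : ∀ a, orb a ⊆ block a := by
    rintro a x ⟨u, hu, rfl⟩
    have himg : ((u : ZMod p) * ·) '' block a = block a := hu (block a) (hblock a).1
    rw [← himg]
    exact ⟨a, (hblock a).2, rfl⟩
  -- characters
  set v : ZMod p → (↥(S.toFinite.toFinset) → ℂ) :=
    fun t C => chi p t (classSum C.1) with hvdef
  have hvC : ∀ a b : ZMod p, v a = v b →
      ∀ C ∈ S, chi p a (classSum C) = chi p b (classSum C) := by
    intro a b hv C hC
    exact congrFun hv ⟨C, (S.toFinite.mem_toFinset).mpr hC⟩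
  have hsumchi : ∀ t : ZMod p,
      chi p t (classSum (Set.univ : Set (ZMod p)))
        = ∑ C ∈ S.toFinite.toFinset, chi p t (classSum C) := by
    intro t
    rw [← classSum_total hpart, map_sum]
  -- v determines orbits
  have hvinj : ∀ a b : ZMod p, v a = v b → orb a = orb b := by
    intro a b hv
    have hab0 : (a = 0) ↔ (b = 0) := by
      have hsums : chi p a (classSum (Set.univ : Set (ZMod p)))
          = chi p b (classSum (Set.univ : Set (ZMod p))) := by
        rw [hsumchi a, hsumchi b]
        exact Finset.sum_congr rfl fun C hC =>
          hvC a b hv C ((S.toFinite.mem_toFinset).mp hC)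
      constructor
      · intro ha
        by_contra hbne
        rw [ha, chi_univ_zero, chi_univ_ne hp hbne] at hsums
        exact (Nat.cast_ne_zero.mpr hp.pos.ne').elim (by exact_mod_cast hsums)
      · intro hb
        by_contra hane
        rw [hb, chi_univ_zero, chi_univ_ne hp hane] at hsums
        exact (Nat.cast_ne_zero.mpr hp.pos.ne').elim (by exact_mod_cast hsums.symm)
    by_cases ha : a = 0
    · rw [ha, hab0.mp ha]
    · have hb : b ≠ 0 := fun h => ha (hab0.mpr h)
      set ua : (ZMod p)ˣ := Units.mk0 a ha with hua
      set ub : (ZMod p)ˣ := Units.mk0 b hb with hub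
      have himg : ∀ C ∈ S, (((ua : ZMod p)) * ·) '' C = (((ub : ZMod p)) * ·) '' C := by
        intro C hC
        have hcards : ∀ (t : ZMod p), t ≠ 0 →
            (((t * ·) '' C)).toFinite.toFinset.card = C.toFinite.toFinset.card := by
          intro t ht
          rw [← Set.ncard_eq_toFinset_card _ _, ← Set.ncard_eq_toFinset_card _ _]
          exact Set.ncard_image_of_injective C (mul_right_injective₀ ht)
        apply indicator_eq hp
        · exact (hcards a ha).trans (hcards b hb).symm
        · rw [← chi_image ua C, ← chi_image ub C]
          exact hvC a b hv C hC
      have hu : ub⁻¹ * ua ∈ H := by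
        rw [hHmem]
        intro C hC
        have hcomp : (fun x => (((ub⁻¹ * ua) : (ZMod p)ˣ) : ZMod p) * x)
            = (fun x => ((ub⁻¹ : (ZMod p)ˣ) : ZMod p) * x) ∘ (fun x => (ua : ZMod p) * x) :=
          funext fun x => by rw [Units.val_mul, mul_assoc]; rfl
        rw [hcomp, Set.image_comp, himg C hC, ← Set.image_comp]
        have hid : ((fun x => ((ub⁻¹ : (ZMod p)ˣ) : ZMod p) * x)
            ∘ (fun x => ((ub : (ZMod p)ˣ) : ZMod p) * x)) = id := by
          funext x
          show ((ub⁻¹ : (ZMod p)ˣ) : ZMod p) * ((ub : ZMod p) * x) = x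
          rw [← mul_assoc, ← Units.val_mul, inv_mul_cancel, Units.val_one, one_mul]
        rw [hid, Set.image_id]
      have hmem : a ∈ orb b := by
        refine ⟨ub⁻¹ * ua, hu, ?_⟩
        show (((ub⁻¹ * ua) : (ZMod p)ˣ) : ZMod p) * b = a
        have h1 : ((ub⁻¹ : (ZMod p)ˣ) : ZMod p) * b = 1 := by
          rw [show b = ((ub : (ZMod p)ˣ) : ZMod p) from rfl, ← Units.val_mul,
            inv_mul_cancel, Units.val_one]
        rw [Units.val_mul, show ((ua : (ZMod p)ˣ) : ZMod p) = a from rfl]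
        linear_combination a * h1
      exact ho3 b a hmem
  -- the set of orbits
  set OO : Set (Set (ZMod p)) := Set.range orb with hOO
  haveI : Finite ↥OO := (Set.finite_range orb).to_subtype
  have hoRep : ∀ O : ↥OO, ∃ a, orb a = O.1 := fun O => O.2
  set oRep : ↥OO → ZMod p := fun O => (hoRep O).choose with hoRepdef
  have hoRepSpec : ∀ O : ↥OO, orb (oRep O) = O.1 := fun O => (hoRep O).choose_spec
  -- surjection from orbits to blocks
  set f : ↥OO → ↥S := fun O => ⟨block (oRep O), (hblock (oRep O)).1⟩ with hfdef
  have hblockrep : ∀ (x : ZMod p) (O : ↥OO), O.1 = orb x → block (oRep O) = block x := by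
    intro x O hOx
    have hr : orb (oRep O) = orb x := by rw [hoRepSpec O, hOx]
    have hrx : oRep O ∈ orb x := hr ▸ ho1 (oRep O)
    have hrb : oRep O ∈ block x := ho4 x hrx
    exact (hbuniq (oRep O) (block x) ⟨(hblock x).1, hrb⟩).symm
  have hfsurj : Function.Surjective f := by
    rintro ⟨C, hC⟩
    obtain ⟨x, hx⟩ := hCne C hC
    refine ⟨⟨orb x, Set.mem_range_self x⟩, ?_⟩
    apply Subtype.ext
    show block (oRep ⟨orb x, Set.mem_range_self x⟩) = C
    rw [hblockrep x ⟨orb x, Set.mem_range_self x⟩ rfl]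
    exact (hblockeq C hC x hx).symm
  -- injection from orbits to characters
  set W : Set (↥(S.toFinite.toFinset) → ℂ) := Set.range v with hW
  haveI : Finite ↥W := (Set.finite_range v).to_subtype
  set g : ↥OO → ↥W := fun O => ⟨v (oRep O), Set.mem_range_self _⟩ with hgdef
  have hginj : Function.Injective g := by
    intro O1 O2 h
    have hveq : v (oRep O1) = v (oRep O2) := congrArg Subtype.val h
    have horbeq : orb (oRep O1) = orb (oRep O2) := hvinj _ _ hveq
    apply Subtype.ext
    rw [← hoRepSpec O1, ← hoRepSpec O2, horbeq]
  -- counting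
  have c1 : Nat.card ↥S ≤ Nat.card ↥OO := Nat.card_le_card_of_surjective f hfsurj
  have c2 : Nat.card ↥OO ≤ Nat.card ↥W := Nat.card_le_card_of_injective g hginj
  have c3 : Nat.card ↥W ≤ Nat.card ↥S := card_range_le S h0S hmulS
  have hfbij : Function.Bijective f :=
    hfsurj.bijective_of_nat_card_le (le_antisymm (c2.trans c3) c1).le
  -- every block is an orbit
  have hkey : ∀ a : ZMod p, block a = orb a := by
    intro a
    refine Set.Subset.antisymm ?_ (ho4 a)
    intro x hx
    have hxa : block x = block a := (hbuniq x (block a) ⟨(hblock a).1, hx⟩).symm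
    have h1 : block (oRep ⟨orb a, Set.mem_range_self a⟩) = block a :=
      hblockrep a ⟨orb a, Set.mem_range_self a⟩ rfl
    have h2 : block (oRep ⟨orb x, Set.mem_range_self x⟩) = block a :=
      (hblockrep x ⟨orb x, Set.mem_range_self x⟩ rfl).trans hxa
    have hfeq : f ⟨orb a, Set.mem_range_self a⟩ = f ⟨orb x, Set.mem_range_self x⟩ :=
      Subtype.ext (h1.trans h2.symm)
    have := congrArg Subtype.val (hfbij.1 hfeq)
    have horbax : orb a = orb x := this
    rw [horbax]
    exact ho1 x
  -- conclusion
  ext C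
  simp only [Set.mem_setOf_eq]
  constructor
  · intro hC
    obtain ⟨x, hx⟩ := hCne C hC
    exact ⟨x, (hblockeq C hC x hx).trans (hkey x)⟩
  · rintro ⟨a, rfl⟩
    have := (hblock a).1
    rwa [hkey a] at this
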